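/- For a ≥ 0, b ∈ (-π, π) with (a,b) ≠ (0,0), the series ∑_{k ∈ ℤ} 2a/(a² + (b - kπ)²) converges and equals 2 sinh(2a)/(cosh(2a) - cos(2b)). -/

import Mathlib

open Real

section Aux
open MeasureTheory Set

lemma aux_integrableOn_cexp {c : ℂ} (hc : 0 < c.re) :
    IntegrableOn (fun x : ℝ => Complex.exp (-(c * x))) (Ioi 0) := by
  apply Integrable.mono' (g := fun x : ℝ => Real.exp (-c.re * x))
  · exact exp_neg_integrableOn_Ioi 0 hc
  · exact (Complex.continuous_exp.comp (by continuity)).aestronglyMeasurable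
  · filter_upwards with x
    rw [Complex.norm_exp]
    simp [neg_mul]

lemma aux_integral_cexp_Ioi {c : ℂ} (hc : 0 < c.re) :
    ∫ x : ℝ in Ioi 0, Complex.exp (-(c * x)) = 1 / c := by
  have hc0 : c ≠ 0 := fun h => by simp [h] at hc
  have hderiv : ∀ x ∈ Ici (0:ℝ), HasDerivAt (fun x : ℝ => -Complex.exp (-(c * x)) / c)
      (Complex.exp (-(c * x))) x := by
    intro x _
    have h1 : HasDerivAt (fun x : ℝ => ((x : ℂ))) 1 x := Complex.ofRealCLM.hasDerivAt
    have h2 : HasDerivAt (fun x : ℝ => -(c * (x:ℂ))) (-c) x := by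
      have := (h1.const_mul c).neg
      simp only [mul_one] at this
      exact this
    have h3 := h2.cexp
    have h4 := (h3.neg).div_const c
    exact h4.congr_deriv (by field_simp)
  have htend : Filter.Tendsto (fun x : ℝ => -Complex.exp (-(c * x)) / c) Filter.atTop (nhds 0) := by
    rw [tendsto_zero_iff_norm_tendsto_zero]
    have : (fun x : ℝ => ‖-Complex.exp (-(c * x)) / c‖) = fun x : ℝ => Real.exp (-c.re * x) / ‖c‖ := by
      ext x
      rw [norm_div, norm_neg, Complex.norm_exp]
      simp [neg_mul]
    rw [this]
    have h5 : Filter.Tendsto (fun x : ℝ => -c.re * x) Filter.atTop Filter.atBot :=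
      Filter.Tendsto.const_mul_atTop_of_neg (by linarith) Filter.tendsto_id
    simpa using ((Real.tendsto_exp_atBot).comp h5).div_const ‖c‖
  have := integral_Ioi_of_hasDerivAt_of_tendsto' hderiv (aux_integrableOn_cexp hc) htend
  rw [this]
  simp [neg_div]

lemma aux_integral_full {s t : ℝ} (hs : 0 < s) :
    ∫ x : ℝ, Complex.exp (-(s * |x| : ℝ) + (t * x : ℝ) * Complex.I)
      = 1 / (s - t * Complex.I) + 1 / (s + t * Complex.I) := by
  have h1 : ∀ x ∈ Ioi (0:ℝ),
      Complex.exp (-(s * |x| : ℝ) + (t * x : ℝ) * Complex.I)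
        = Complex.exp (-(((s:ℂ) - t * Complex.I) * x)) := by
    intro x hx
    congr 1
    rw [abs_of_pos hx]
    push_cast
    ring
  have h2 : ∀ x ∈ Ioi (0:ℝ),
      Complex.exp (-(s * |(-x)| : ℝ) + (t * (-x) : ℝ) * Complex.I)
        = Complex.exp (-(((s:ℂ) + t * Complex.I) * x)) := by
    intro x hx
    congr 1
    rw [abs_neg, abs_of_pos hx]
    push_cast
    ring
  have hre1 : (0:ℝ) < ((s : ℂ) - t * Complex.I).re := by simp [hs]
  have hre2 : (0:ℝ) < ((s : ℂ) + t * Complex.I).re := by simp [hs]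
  have hint1 : IntegrableOn
      (fun x : ℝ => Complex.exp (-(s * |x| : ℝ) + (t * x : ℝ) * Complex.I)) (Ioi 0) :=
    (aux_integrableOn_cexp hre1).congr_fun (fun x hx => (h1 x hx).symm) measurableSet_Ioi
  have hint2' : IntegrableOn
      (fun x : ℝ => Complex.exp (-(s * |(-x)| : ℝ) + (t * (-x) : ℝ) * Complex.I)) (Ioi 0) :=
    (aux_integrableOn_cexp hre2).congr_fun (fun x hx => (h2 x hx).symm) measurableSet_Ioi
  have hint2 : IntegrableOn
      (fun x : ℝ => Complex.exp (-(s * |x| : ℝ) + (t * x : ℝ) * Complex.I)) (Iic 0) := by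
    have A : MeasurableEmbedding fun x : ℝ => -x :=
      (Homeomorph.neg ℝ).isClosedEmbedding.measurableEmbedding
    rw [IntegrableOn, ← Measure.map_neg_eq_self (volume : Measure ℝ)]
    have A : MeasurableEmbedding fun x : ℝ => -x :=
      (Homeomorph.neg ℝ).isClosedEmbedding.measurableEmbedding
    rw [show (Measure.map Neg.neg (volume : Measure ℝ)) = Measure.map (fun x : ℝ => -x) volume
      from rfl]
    rw [Measure.restrict_map A.measurable measurableSet_Iic, A.integrable_map_iff]
    have hpre : (fun x : ℝ => -x) ⁻¹' (Iic 0) = Ici 0 := by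
      ext x; simp
    rw [hpre]
    exact (integrableOn_Ici_iff_integrableOn_Ioi).mpr hint2'
  have hsplit := intervalIntegral.integral_Iic_add_Ioi (μ := volume)
    (f := fun x : ℝ => Complex.exp (-(s * |x| : ℝ) + (t * x : ℝ) * Complex.I)) hint2 hint1
  have e1 : (∫ x in Ioi (0:ℝ), Complex.exp (-(s * |x| : ℝ) + (t * x : ℝ) * Complex.I))
      = 1 / ((s:ℂ) - t * Complex.I) := by
    rw [setIntegral_congr_fun measurableSet_Ioi h1, aux_integral_cexp_Ioi hre1]
  have e2 : (∫ x in Iic (0:ℝ), Complex.exp (-(s * |x| : ℝ) + (t * x : ℝ) * Complex.I))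
      = 1 / ((s:ℂ) + t * Complex.I) := by
    have e2a := integral_comp_neg_Iic (0:ℝ)
      (fun y : ℝ => Complex.exp (-(s * |(-y)| : ℝ) + (t * (-y) : ℝ) * Complex.I))
    simp only [neg_neg, neg_zero] at e2a
    rw [e2a, setIntegral_congr_fun measurableSet_Ioi h2, aux_integral_cexp_Ioi hre2]
  rw [← hsplit, e1, e2, add_comm]

lemma aux_div_add_div (A t : ℝ) (hA : 0 < A) :
    1 / ((A:ℂ) - t * Complex.I) + 1 / ((A:ℂ) + t * Complex.I)
      = ((2 * A / (A ^ 2 + t ^ 2) : ℝ) : ℂ) := by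
  have hz1 : (A:ℂ) - t * Complex.I ≠ 0 := by
    intro h
    have := congrArg Complex.re h
    simp at this
    linarith
  have hz2 : (A:ℂ) + t * Complex.I ≠ 0 := by
    intro h
    have := congrArg Complex.re h
    simp at this
    linarith
  have hmul : ((A:ℂ) - t * Complex.I) * ((A:ℂ) + t * Complex.I) = ((A^2 + t^2 : ℝ) : ℂ) := by
    have : Complex.I * Complex.I = -1 := Complex.I_mul_I
    push_cast
    ring_nf
    rw [Complex.I_sq]
    ring
  rw [div_add_div _ _ hz1 hz2, hmul]
  push_cast
  congr 1
  ring

lemma aux_fourier {a b : ℝ} (ha : 0 < a) (w : ℝ) :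
    FourierTransform.fourier
      (fun x : ℝ => 2 * Complex.exp (-(2 * a * |x| : ℝ) + (2 * b * x : ℝ) * Complex.I)) w
      = ((2 * a / (a ^ 2 + (b - π * w) ^ 2) : ℝ) : ℂ) := by
  have hs : 0 < 2 * a := by linarith
  rw [Real.fourier_real_eq_integral_exp_smul]
  have hcongr : ∀ v : ℝ,
      Complex.exp ((-2 * π * v * w : ℝ) * Complex.I) •
        (2 * Complex.exp (-(2 * a * |v| : ℝ) + (2 * b * v : ℝ) * Complex.I))
      = 2 * Complex.exp (-(2 * a * |v| : ℝ) + ((2 * b - 2 * π * w) * v : ℝ) * Complex.I) := by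
    intro v
    rw [smul_eq_mul]
    rw [show Complex.exp ((-2 * π * v * w : ℝ) * Complex.I) *
        (2 * Complex.exp (-(2 * a * |v| : ℝ) + (2 * b * v : ℝ) * Complex.I))
      = 2 * (Complex.exp ((-2 * π * v * w : ℝ) * Complex.I) *
          Complex.exp (-(2 * a * |v| : ℝ) + (2 * b * v : ℝ) * Complex.I)) by ring]
    rw [← Complex.exp_add]
    congr 2
    push_cast
    ring
  simp_rw [hcongr]
  rw [MeasureTheory.integral_const_mul, aux_integral_full hs,
    aux_div_add_div _ _ hs]
  rw [show (2:ℂ) = ((2:ℝ):ℂ) from by norm_num, ← Complex.ofReal_mul]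
  congr 1
  have hd : a ^ 2 + (b - π * w) ^ 2 ≠ 0 := by positivity
  have hd2 : (2*a) ^ 2 + (2 * b - 2 * π * w) ^ 2 ≠ 0 := by positivity
  field_simp

lemma aux_abs_bound {b : ℝ} (hb : |b| < π) (k : ℤ) (hk : k ≠ 0) :
    (π - |b|) ^ 2 * (k:ℝ) ^ 2 ≤ (b - k * π) ^ 2 := by
  have hπ : 0 < π := Real.pi_pos
  have hk1 : (1:ℝ) ≤ |(k:ℝ)| := by
    rw [← Int.cast_abs]
    exact_mod_cast Int.one_le_abs hk
  have h1 : |(k:ℝ)| * (π - |b|) ≤ |b - k * π| := by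
    have h2 : |(k:ℝ) * π| - |b| ≤ |(k:ℝ) * π - b| := abs_sub_abs_le_abs_sub _ _
    rw [abs_sub_comm] at h2
    rw [abs_mul, abs_of_pos hπ] at h2
    nlinarith [abs_nonneg b]
  have h3 : (|(k:ℝ)| * (π - |b|)) ^ 2 ≤ |b - k * π| ^ 2 := by
    apply pow_le_pow_left₀ (mul_nonneg (abs_nonneg _) (by linarith)) h1
  rw [sq_abs, mul_pow, sq_abs] at h3
  linarith [h3]

lemma aux_summable {a b : ℝ} (ha : 0 ≤ a) (hb : |b| < π) :
    Summable (fun k : ℤ => 2 * a / (a ^ 2 + (b - k * π) ^ 2)) := by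
  have hπb : 0 < π - |b| := by linarith [Real.pi_pos]
  apply summable_of_isBigO (g := fun k : ℤ => 1 / (k:ℝ) ^ 2)
    (summable_one_div_int_pow.mpr one_lt_two)
  rw [Asymptotics.isBigO_iff]
  refine ⟨2 * a / (π - |b|) ^ 2, ?_⟩
  have : ∀ k : ℤ, k ≠ 0 →
      ‖2 * a / (a ^ 2 + (b - k * π) ^ 2)‖ ≤ 2 * a / (π - |b|) ^ 2 * ‖1 / (k:ℝ) ^ 2‖ := by
    intro k hk
    have hk2 : (0:ℝ) < (k:ℝ) ^ 2 := by
      have : (k:ℝ) ≠ 0 := Int.cast_ne_zero.mpr hk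
      positivity
    have hbd := aux_abs_bound hb k hk
    have hden : 0 < (π - |b|) ^ 2 * (k:ℝ) ^ 2 := by positivity
    have hterm : 2 * a / (a ^ 2 + (b - k * π) ^ 2) ≤ 2 * a / ((π - |b|) ^ 2 * (k:ℝ) ^ 2) := by
      apply div_le_div_of_nonneg_left (by linarith) hden
      nlinarith [sq_nonneg a]
    rw [Real.norm_eq_abs, Real.norm_eq_abs, abs_of_nonneg (by positivity),
      abs_of_nonneg (by positivity : (0:ℝ) ≤ 1 / (k:ℝ) ^ 2)]
    calc 2 * a / (a ^ 2 + (b - k * π) ^ 2) ≤ 2 * a / ((π - |b|) ^ 2 * (k:ℝ) ^ 2) := hterm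
      _ = 2 * a / (π - |b|) ^ 2 * (1 / (k:ℝ) ^ 2) := by
          rw [div_mul_div_comm]
          ring_nf
  have hfin : {k : ℤ | ¬ ‖2 * a / (a ^ 2 + (b - k * π) ^ 2)‖
      ≤ 2 * a / (π - |b|) ^ 2 * ‖1 / (k:ℝ) ^ 2‖}.Finite := by
    apply Set.Finite.subset (Set.finite_singleton (0:ℤ))
    intro k hk
    simp only [Set.mem_setOf_eq] at hk
    by_contra hk0
    exact hk (this k (by simpa using hk0))
  exact hfin

lemma aux_denom_pos {a b : ℝ} (ha : 0 < a) :
    0 < Real.cosh (2*a) - Real.cos (2*b) := by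
  have h1 : 1 < Real.cosh (2*a) := by
    rw [Real.one_lt_cosh]
    positivity
  have h2 : Real.cos (2*b) ≤ 1 := Real.cos_le_one _
  linarith

lemma aux_real_id {a b : ℝ} (ha : 0 < a) :
    (2 * Real.sinh (2*a) / (Real.cosh (2*a) - Real.cos (2*b)))
      * (1 - 2 * Real.exp (-(2*a)) * Real.cos (2*b) + Real.exp (-(2*a))^2)
      = 2 - 2 * Real.exp (-(2*a))^2 := by
  have hden := aux_denom_pos (b := b) ha
  have hD : Real.cosh (2*a) - Real.cos (2*b) ≠ 0 := ne_of_gt hden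
  have hF : (1 - 2 * Real.exp (-(2*a)) * Real.cos (2*b) + Real.exp (-(2*a))^2)
      = 2 * Real.exp (-(2*a)) * (Real.cosh (2*a) - Real.cos (2*b)) := by
    rw [Real.cosh_eq, Real.exp_neg]
    field_simp
    ring
  rw [hF]
  have hstep : (2 * Real.sinh (2*a) / (Real.cosh (2*a) - Real.cos (2*b)))
      * (2 * Real.exp (-(2*a)) * (Real.cosh (2*a) - Real.cos (2*b)))
      = 2 * Real.sinh (2*a) * (2 * Real.exp (-(2*a))) := by
    field_simp
  rw [hstep, Real.sinh_eq, Real.exp_neg]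
  field_simp

lemma aux_geom {a b : ℝ} (ha : 0 < a) :
    HasSum (fun n : ℤ => 2 * Complex.exp (-(2 * a * |(n:ℝ)| : ℝ) + (2 * b * (n:ℝ) : ℝ) * Complex.I))
      (((2 * Real.sinh (2*a) / (Real.cosh (2*a) - Real.cos (2*b)) : ℝ)) : ℂ) := by
  set z : ℂ := Complex.exp ((-(2*a) : ℝ) + (2*b : ℝ) * Complex.I) with hzdef
  set w : ℂ := Complex.exp ((-(2*a) : ℝ) - (2*b : ℝ) * Complex.I) with hwdef
  have hznorm : ‖z‖ < 1 := by
    rw [hzdef, Complex.norm_exp]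
    simp only [Complex.add_re, Complex.ofReal_re, Complex.mul_re, Complex.I_re, Complex.I_im,
      Complex.ofReal_im, mul_zero, mul_one, zero_sub, sub_zero]
    rw [show (-(2*a) + 0 : ℝ) = -(2*a) by ring]
    exact Real.exp_lt_one_iff.mpr (by linarith)
  have hwnorm : ‖w‖ < 1 := by
    rw [hwdef, Complex.norm_exp]
    simp only [Complex.sub_re, Complex.ofReal_re, Complex.mul_re, Complex.I_re, Complex.I_im,
      Complex.ofReal_im, mul_zero, mul_one, zero_sub, sub_zero]
    exact Real.exp_lt_one_iff.mpr (by linarith)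
  have hpos : HasSum (fun n : ℕ =>
      2 * Complex.exp (-(2 * a * |((n:ℤ):ℝ)| : ℝ) + (2 * b * ((n:ℤ):ℝ) : ℝ) * Complex.I))
      (2 * (1 - z)⁻¹) := by
    have hg := (hasSum_geometric_of_norm_lt_one hznorm).mul_left 2
    refine hg.congr_fun fun n => ?_
    rw [hzdef, ← Complex.exp_nat_mul]
    congr 2
    push_cast [abs_of_nonneg (by positivity : (0:ℝ) ≤ (n:ℝ))]
    ring
  have hneg : HasSum (fun n : ℕ =>
      2 * Complex.exp (-(2 * a * |((-(n+1) : ℤ):ℝ)| : ℝ)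
        + (2 * b * ((-(n+1) : ℤ):ℝ) : ℝ) * Complex.I))
      (2 * (w * (1 - w)⁻¹)) := by
    have hg := ((hasSum_geometric_of_norm_lt_one hwnorm).mul_left w).mul_left 2
    refine hg.congr_fun fun n => ?_
    rw [hwdef, ← Complex.exp_nat_mul, ← Complex.exp_add]
    congr 2
    have h1 : ((-(n+1) : ℤ):ℝ) = -((n:ℝ)+1) := by push_cast; ring
    rw [h1, abs_neg, abs_of_nonneg (by positivity : (0:ℝ) ≤ (n:ℝ)+1)]
    push_cast
    ring
  have htotal := HasSum.of_nat_of_neg_add_one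
    (f := fun n : ℤ => 2 * Complex.exp (-(2 * a * |(n:ℝ)| : ℝ) + (2 * b * (n:ℝ) : ℝ) * Complex.I))
    hpos hneg
  convert htotal using 1
  -- now prove the value equality
  have hz1 : (1 : ℂ) - z ≠ 0 := by
    intro h
    have hz : z = 1 := by
      have := sub_eq_zero.mp h
      exact this.symm
    rw [hz] at hznorm
    norm_num at hznorm
  have hw1 : (1 : ℂ) - w ≠ 0 := by
    intro h
    have hw : w = 1 := (sub_eq_zero.mp h).symm
    rw [hw] at hwnorm
    norm_num at hwnorm
  set Ec : ℂ := Complex.exp ((-(2*a) : ℝ) : ℂ) with hEc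
  set Cc : ℂ := Complex.cos ((2*b : ℝ) : ℂ) with hCc
  have hzw : z * w = Ec ^ 2 := by
    rw [hzdef, hwdef, hEc, ← Complex.exp_add, sq, ← Complex.exp_add]
    congr 1
    ring
  have hsum : z + w = 2 * Ec * Cc := by
    rw [hzdef, hwdef, hEc, hCc]
    rw [show ((-(2*a):ℝ) : ℂ) + ((2*b:ℝ):ℂ) * Complex.I
        = ((-(2*a):ℝ) : ℂ) + (((2*b:ℝ):ℂ) * Complex.I) by ring,
      show ((-(2*a):ℝ) : ℂ) - ((2*b:ℝ):ℂ) * Complex.I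
        = ((-(2*a):ℝ) : ℂ) + (-((2*b:ℝ):ℂ) * Complex.I) by ring,
      Complex.exp_add, Complex.exp_add]
    rw [show Complex.exp ((-(2*a):ℝ)) * Complex.exp (((2*b:ℝ):ℂ) * Complex.I)
        + Complex.exp ((-(2*a):ℝ)) * Complex.exp (-((2*b:ℝ):ℂ) * Complex.I)
      = Complex.exp ((-(2*a):ℝ)) *
        (Complex.exp (((2*b:ℝ):ℂ) * Complex.I) + Complex.exp (-((2*b:ℝ):ℂ) * Complex.I)) by ring]
    rw [← Complex.two_cos]
    ring
  have h3 := aux_real_id (b := b) ha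
  have h3c : ((2 * Real.sinh (2*a) / (Real.cosh (2*a) - Real.cos (2*b)) : ℝ) : ℂ)
      * (1 - 2 * Ec * Cc + Ec ^ 2) = 2 - 2 * Ec ^ 2 := by
    have := congrArg (fun x : ℝ => (x : ℂ)) h3
    push_cast at this
    rw [hEc, hCc]
    convert this using 2 <;> push_cast <;> ring_nf <;>
      simp [Complex.ofReal_exp, Complex.ofReal_cos]
  have expand : 2 * (1 - z)⁻¹ + 2 * (w * (1 - w)⁻¹)
      = (2 - 2 * (z * w)) / ((1 - z) * (1 - w)) := by
    field_simp
    ring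
  rw [expand, eq_div_iff (mul_ne_zero hz1 hw1)]
  linear_combination (((2 * Real.sinh (2*a) / (Real.cosh (2*a) - Real.cos (2*b)) : ℝ) : ℂ) + 2) * hzw
    - ((2 * Real.sinh (2*a) / (Real.cosh (2*a) - Real.cos (2*b)) : ℝ) : ℂ) * hsum + h3c

lemma aux_decay_atTop {c : ℝ} (hc : 0 < c) :
    (fun x : ℝ => Real.exp (-(c * |x|))) =O[Filter.atTop] fun x : ℝ => |x| ^ (-2:ℝ) := by
  have ht : Filter.Tendsto (fun x : ℝ => x ^ 2 * Real.exp (-(c * x)))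
      Filter.atTop (nhds 0) := by
    have h0 := tendsto_pow_mul_exp_neg_atTop_nhds_zero 2
    have hcomp := h0.comp (Filter.Tendsto.const_mul_atTop hc Filter.tendsto_id)
    have := hcomp.const_mul ((c ^ 2)⁻¹)
    rw [mul_zero] at this
    refine this.congr fun x => ?_
    have hc2 : (c:ℝ) ^ 2 ≠ 0 := by positivity
    field_simp [Function.comp]
    simp only [Function.comp_apply, id]
    ring
  rw [Asymptotics.isBigO_iff]
  refine ⟨1, ?_⟩
  have h1 : ∀ᶠ x : ℝ in Filter.atTop, x ^ 2 * Real.exp (-(c * x)) ≤ 1 := by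
    have := ht.eventually_le_const (by norm_num : (0:ℝ) < 1)
    exact this
  filter_upwards [h1, Filter.eventually_ge_atTop (1:ℝ)] with x hx hx1
  have hxpos : 0 < x := by linarith
  rw [Real.norm_eq_abs, Real.norm_eq_abs, abs_of_pos (Real.exp_pos _),
    abs_of_pos (Real.rpow_pos_of_pos (by positivity : (0:ℝ) < |x|) _),
    abs_of_pos hxpos]
  rw [show (-2:ℝ) = -(2:ℕ) by norm_num, Real.rpow_neg hxpos.le, Real.rpow_natCast]
  rw [one_mul, inv_eq_one_div, le_div_iff₀ (by positivity : (0:ℝ) < x ^ 2)]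
  nlinarith [hx]

lemma aux_decay {c : ℝ} (hc : 0 < c) :
    (fun x : ℝ => Real.exp (-(c * |x|))) =O[Filter.cocompact ℝ] fun x : ℝ => |x| ^ (-2:ℝ) := by
  rw [cocompact_eq_atBot_atTop, Asymptotics.isBigO_sup]
  refine ⟨?_, ?_⟩
  · have h := (aux_decay_atTop hc).comp_tendsto Filter.tendsto_neg_atBot_atTop
    have e1 : ((fun x : ℝ => Real.exp (-(c * |x|))) ∘ fun x : ℝ => -x)
        = fun x : ℝ => Real.exp (-(c * |x|)) := by
      funext x
      simp [Function.comp, abs_neg]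
    have e2 : ((fun x : ℝ => |x| ^ (-2:ℝ)) ∘ fun x : ℝ => -x)
        = fun x : ℝ => |x| ^ (-2:ℝ) := by
      funext x
      simp [Function.comp, abs_neg]
    rwa [e1, e2] at h
  · exact aux_decay_atTop hc

end Aux

section Main
open MeasureTheory Set

/-- For `a ≥ 0`, `b ∈ (-π, π)`, `(a,b) ≠ (0,0)`:
`∑_{k ∈ ℤ} 2a/(a² + (b - kπ)²) = 2 sinh(2a)/(cosh(2a) - cos(2b))`. -/
theorem stmt_1 (a b : ℝ) (ha : 0 ≤ a) (hb : b ∈ Set.Ioo (-π) π) (hab : ¬(a = 0 ∧ b = 0)) :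
    HasSum (fun k : ℤ => 2 * a / (a ^ 2 + (b - k * π) ^ 2))
      (2 * Real.sinh (2 * a) / (Real.cosh (2 * a) - Real.cos (2 * b))) := by
  rcases eq_or_lt_of_le ha with h0 | hapos
  · -- a = 0 case
    have ha0 : a = 0 := h0.symm
    subst ha0
    simp only [mul_zero, zero_div, Real.sinh_zero]
    simpa using hasSum_zero
  · -- a > 0 case
    have hbabs : |b| < π := abs_lt.mpr ⟨hb.1, hb.2⟩
    set f : ℝ → ℂ :=
      fun x => 2 * Complex.exp (-(2 * a * |x| : ℝ) + (2 * b * x : ℝ) * Complex.I) with hf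
    have hcont : Continuous f := by
      apply Continuous.mul continuous_const
      apply Complex.continuous_exp.comp
      fun_prop
    have hnorm : ∀ x : ℝ, ‖f x‖ = 2 * Real.exp (-(2 * a * |x|)) := by
      intro x
      rw [hf]
      rw [norm_mul, Complex.norm_exp]
      simp only [Complex.add_re, Complex.neg_re, Complex.ofReal_re, Complex.mul_re,
        Complex.I_re, Complex.I_im, Complex.ofReal_im, mul_zero, mul_one, zero_sub, sub_zero]
      norm_num
    have hdecay : f =O[Filter.cocompact ℝ] fun x : ℝ => |x| ^ (-2:ℝ) := by
      have h1 : f =O[Filter.cocompact ℝ] fun x : ℝ => Real.exp (-(2 * a * |x|)) := by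
        rw [Asymptotics.isBigO_iff]
        refine ⟨2, Filter.Eventually.of_forall fun x => ?_⟩
        rw [hnorm x, Real.norm_eq_abs, abs_of_pos (Real.exp_pos _)]
      exact h1.trans (aux_decay (by linarith : (0:ℝ) < 2 * a))
    have hFf : ∀ n : ℤ, FourierTransform.fourier f (n : ℝ)
        = ((2 * a / (a ^ 2 + (b - π * n) ^ 2) : ℝ) : ℂ) := fun n => aux_fourier hapos n
    have hsum' : Summable (fun k : ℤ => 2 * a / (a ^ 2 + (b - k * π) ^ 2)) :=
      aux_summable ha hbabs
    have hsum2 : Summable (fun k : ℤ => 2 * a / (a ^ 2 + (b - π * k) ^ 2)) := by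
      refine hsum'.congr fun k => ?_
      ring_nf
    have hFsummable : Summable fun n : ℤ => FourierTransform.fourier f n := by
      rw [show (fun n : ℤ => FourierTransform.fourier f n)
          = fun n : ℤ => ((2 * a / (a ^ 2 + (b - π * n) ^ 2) : ℝ) : ℂ) from funext hFf]
      exact_mod_cast Complex.summable_ofReal.mpr hsum2
    have hP := Real.tsum_eq_tsum_fourier_of_rpow_decay_of_summable hcont
      one_lt_two hdecay hFsummable 0
    simp only [zero_add, QuotientAddGroup.mk_zero, fourier_eval_zero, mul_one] at hP
    have hgeom := aux_geom (b := b) hapos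
    have hL : ∑' n : ℤ, f (n : ℝ)
        = ((2 * Real.sinh (2*a) / (Real.cosh (2*a) - Real.cos (2*b)) : ℝ) : ℂ) :=
      hgeom.tsum_eq
    have hR : ∑' n : ℤ, FourierTransform.fourier f n
        = ((∑' n : ℤ, 2 * a / (a ^ 2 + (b - π * n) ^ 2) : ℝ) : ℂ) := by
      rw [show (fun n : ℤ => FourierTransform.fourier f n)
          = fun n : ℤ => ((2 * a / (a ^ 2 + (b - π * n) ^ 2) : ℝ) : ℂ) from funext hFf]
      exact (Complex.ofReal_tsum _).symm
    rw [hL, hR] at hP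
    have hreal : (2 * Real.sinh (2*a) / (Real.cosh (2*a) - Real.cos (2*b)))
        = ∑' n : ℤ, 2 * a / (a ^ 2 + (b - π * n) ^ 2) := Complex.ofReal_inj.mp hP
    have htsum : (∑' n : ℤ, 2 * a / (a ^ 2 + (b - n * π) ^ 2))
        = 2 * Real.sinh (2*a) / (Real.cosh (2*a) - Real.cos (2*b)) := by
      rw [hreal]
      exact tsum_congr fun k => by ring_nf
    rw [← htsum]
    exact hsum'.hasSum

end Main
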